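/- arXiv:0911.0937 — 2 statements merged into one kernel-verified Lean document; each statement's English description precedes it below -/
import Mathlib

section
/- Let P and Q be probability measures with positive densities p, q with respect to a σ-finite measure λ, and let φ be strictly convex and differentiable on (0,∞) with φ(1)=0. Define φ#(t) = φ(t) − tφ'(t). Then for any third probability measure P̃ with positive density p̃, the quantity ∫ φ'(p/p̃) dP + ∫ φ#(p/p̃) dQ is at most D_φ(P,Q) = ∫ φ(p/q) dQ, with equality if and only if p̃ = q λ-almost surely. (All integrals assumed finite.) -/
open MeasureTheory

/-- Strict tangent line inequality for a strictly convex differentiable function on `Ioi 0`. -/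
lemma tangent_lt_aux {φ : ℝ → ℝ} (hconv : StrictConvexOn ℝ (Set.Ioi (0:ℝ)) φ)
    (hdiff : ∀ x ∈ Set.Ioi (0:ℝ), DifferentiableAt ℝ φ x)
    {s t : ℝ} (hs : 0 < s) (ht : 0 < t) (hne : s ≠ t) :
    φ s + deriv φ s * (t - s) < φ t := by
  rcases lt_or_gt_of_ne hne with h | h
  · have := hconv.deriv_lt_slope hs ht h (hdiff s hs)
    rw [slope_def_field] at this
    have hts : 0 < t - s := sub_pos.2 h
    rw [lt_div_iff₀ hts] at this
    nlinarith
  · have := hconv.slope_lt_deriv ht hs h (hdiff s hs)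
    rw [slope_def_field] at this
    have hst : 0 < s - t := sub_pos.2 h
    rw [div_lt_iff₀ hst] at this
    nlinarith

theorem stmt_6 {X : Type*} [MeasurableSpace X] (lam : Measure X) [SigmaFinite lam]
    (p q pt : X → ℝ) (φ : ℝ → ℝ)
    (hp : Measurable p) (hq : Measurable q) (hpt : Measurable pt)
    (hppos : ∀ᵐ x ∂lam, 0 < p x) (hqpos : ∀ᵐ x ∂lam, 0 < q x)
    (hptpos : ∀ᵐ x ∂lam, 0 < pt x)
    (hpone : ∫ x, p x ∂lam = 1) (hqone : ∫ x, q x ∂lam = 1)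
    (hptone : ∫ x, pt x ∂lam = 1)
    (hconv : StrictConvexOn ℝ (Set.Ioi (0:ℝ)) φ)
    (hdiff : ∀ x ∈ Set.Ioi (0:ℝ), DifferentiableAt ℝ φ x)
    (hφ1 : φ 1 = 0)
    (h1 : Integrable (fun x => φ (p x / q x) * q x) lam)
    (h2 : Integrable (fun x => deriv φ (p x / pt x) * p x) lam)
    (h3 : Integrable
      (fun x => (φ (p x / pt x) - (p x / pt x) * deriv φ (p x / pt x)) * q x) lam) :
    ((∫ x, deriv φ (p x / pt x) * p x ∂lam) +
        (∫ x, (φ (p x / pt x) - (p x / pt x) * deriv φ (p x / pt x)) * q x ∂lam) ≤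
      ∫ x, φ (p x / q x) * q x ∂lam) ∧
    ((∫ x, deriv φ (p x / pt x) * p x ∂lam) +
        (∫ x, (φ (p x / pt x) - (p x / pt x) * deriv φ (p x / pt x)) * q x ∂lam) =
      (∫ x, φ (p x / q x) * q x ∂lam) ↔ pt =ᵐ[lam] q) := by
  set g : X → ℝ := fun x => φ (p x / q x) * q x -
      (deriv φ (p x / pt x) * p x +
        (φ (p x / pt x) - (p x / pt x) * deriv φ (p x / pt x)) * q x) with hg_def
  have hg_int : Integrable g lam := h1.sub (h2.add h3)
  -- pointwise facts
  have hpt_all : ∀ᵐ x ∂lam, 0 ≤ g x ∧ (g x = 0 ↔ pt x = q x) := by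
    filter_upwards [hppos, hqpos, hptpos] with x hpx hqx hptx
    obtain ⟨t, htd⟩ : ∃ t, p x / q x = t := ⟨_, rfl⟩
    obtain ⟨s, hsd⟩ : ∃ s, p x / pt x = s := ⟨_, rfl⟩
    have ht : 0 < t := htd ▸ div_pos hpx hqx
    have hs : 0 < s := hsd ▸ div_pos hpx hptx
    have hkey : g x = q x * (φ t - (φ s + deriv φ s * (t - s))) := by
      have h0 : t * q x = p x := by rw [← htd]; exact div_mul_cancel₀ _ (ne_of_gt hqx)
      simp only [hg_def, htd, hsd]
      linear_combination (deriv φ s) * h0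
    have hst_iff : s = t ↔ pt x = q x := by
      constructor
      · intro h
        have h' : p x / pt x = p x / q x := by rw [hsd, htd, h]
        rw [div_eq_div_iff (ne_of_gt hptx) (ne_of_gt hqx)] at h'
        exact mul_left_cancel₀ (ne_of_gt hpx) h'.symm
      · intro h; rw [← hsd, ← htd, h]
    by_cases hst : s = t
    · constructor
      · rw [hkey, hst]; simp
      · constructor
        · intro _; exact hst_iff.1 hst
        · intro _; rw [hkey, hst]; simp
    · have hlt : φ s + deriv φ s * (t - s) < φ t := tangent_lt_aux hconv hdiff hs ht hst
      have hgpos : 0 < g x := by rw [hkey]; exact mul_pos hqx (sub_pos.2 hlt)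
      constructor
      · exact hgpos.le
      · constructor
        · intro h; exact absurd h (ne_of_gt hgpos)
        · intro h; exact absurd (hst_iff.2 h) hst
  have hg_nonneg : 0 ≤ᵐ[lam] g := by filter_upwards [hpt_all] with x hx using hx.1
  have hintg : ∫ x, g x ∂lam =
      (∫ x, φ (p x / q x) * q x ∂lam) -
        ((∫ x, deriv φ (p x / pt x) * p x ∂lam) +
          (∫ x, (φ (p x / pt x) - (p x / pt x) * deriv φ (p x / pt x)) * q x ∂lam)) := by
    have h23 : Integrable (fun x => deriv φ (p x / pt x) * p x +
        (φ (p x / pt x) - (p x / pt x) * deriv φ (p x / pt x)) * q x) lam := h2.add h3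
    rw [hg_def]
    rw [integral_sub h1 h23, integral_add h2 h3]
  have hge : 0 ≤ ∫ x, g x ∂lam := integral_nonneg_of_ae hg_nonneg
  constructor
  · linarith [hge, hintg]
  · rw [show ((∫ x, deriv φ (p x / pt x) * p x ∂lam) +
        (∫ x, (φ (p x / pt x) - (p x / pt x) * deriv φ (p x / pt x)) * q x ∂lam) =
      (∫ x, φ (p x / q x) * q x ∂lam)) ↔ (∫ x, g x ∂lam) = 0 by
        rw [hintg]; constructor <;> intro h <;> linarith]
    rw [integral_eq_zero_iff_of_nonneg_ae hg_nonneg hg_int]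
    constructor
    · intro h
      have : ∀ᵐ x ∂lam, g x = 0 := h
      filter_upwards [this, hpt_all] with x hgx hx
      exact hx.2.1 hgx
    · intro h
      have : ∀ᵐ x ∂lam, g x = 0 := by
        filter_upwards [h, hpt_all] with x hx hax
        exact hax.2.2 hx
      exact this
end

section
/- For normal densities p_{μ,σ} and p_{μ̃,σ̃} with 0 < α < 1, the integral ∫ (p_{μ,σ}/p_{μ̃,σ̃})^α p_{μ̃,σ̃} dx equals exp{ −α(1−α)(μ−μ̃)²/(2[ασ̃² + (1−α)σ²]) − ln( √(ασ̃² + (1−α)σ²) / (σ̃^α σ^{1−α}) ) }. -/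
open Real MeasureTheory

theorem stmt_18 (μ μt σ σt α : ℝ) (hσ : 0 < σ) (hσt : 0 < σt)
    (hα0 : 0 < α) (hα1 : α < 1) :
    (∫ x : ℝ,
        (((2 * Real.pi * σ ^ 2) ^ (-(1:ℝ) / 2) *
            Real.exp (-(x - μ) ^ 2 / (2 * σ ^ 2))) /
          ((2 * Real.pi * σt ^ 2) ^ (-(1:ℝ) / 2) *
            Real.exp (-(x - μt) ^ 2 / (2 * σt ^ 2)))) ^ α *
        ((2 * Real.pi * σt ^ 2) ^ (-(1:ℝ) / 2) *
          Real.exp (-(x - μt) ^ 2 / (2 * σt ^ 2))))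
      = Real.exp (-(α * (1 - α) * (μ - μt) ^ 2) /
            (2 * (α * σt ^ 2 + (1 - α) * σ ^ 2)) -
          Real.log (Real.sqrt (α * σt ^ 2 + (1 - α) * σ ^ 2) /
            (σt ^ α * σ ^ (1 - α)))) := by
  have hπ : 0 < Real.pi := Real.pi_pos
  set D : ℝ := α * σt ^ 2 + (1 - α) * σ ^ 2 with hDdef
  have hD : 0 < D := by
    have h1 : 0 < α * σt ^ 2 := by positivity
    have h2 : 0 < (1 - α) * σ ^ 2 := mul_pos (by linarith) (by positivity)
    rw [hDdef]; linarith
  set k : ℝ := D / (2 * σ ^ 2 * σt ^ 2) with hkdef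
  have hk : 0 < k := by positivity
  set m : ℝ := (α * σt ^ 2 * μ + (1 - α) * σ ^ 2 * μt) / D with hmdef
  set E : ℝ := α * (1 - α) * (μ - μt) ^ 2 / (2 * D) with hEdef
  have hA : (0:ℝ) < (2 * Real.pi * σ ^ 2) ^ (-(1:ℝ) / 2) := by positivity
  have hB : (0:ℝ) < (2 * Real.pi * σt ^ 2) ^ (-(1:ℝ) / 2) := by positivity
  set CV : ℝ := α * Real.log ((2 * Real.pi * σ ^ 2) ^ (-(1:ℝ) / 2)) +
      (1 - α) * Real.log ((2 * Real.pi * σt ^ 2) ^ (-(1:ℝ) / 2)) - E with hCVdef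
  have key : ∀ x : ℝ,
      (((2 * Real.pi * σ ^ 2) ^ (-(1:ℝ) / 2) *
            Real.exp (-(x - μ) ^ 2 / (2 * σ ^ 2))) /
          ((2 * Real.pi * σt ^ 2) ^ (-(1:ℝ) / 2) *
            Real.exp (-(x - μt) ^ 2 / (2 * σt ^ 2)))) ^ α *
        ((2 * Real.pi * σt ^ 2) ^ (-(1:ℝ) / 2) *
          Real.exp (-(x - μt) ^ 2 / (2 * σt ^ 2)))
      = Real.exp CV * Real.exp (-k * (x - m) ^ 2) := by
    intro x
    have hexp : α * (-(x - μ) ^ 2 / (2 * σ ^ 2)) +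
        (1 - α) * (-(x - μt) ^ 2 / (2 * σt ^ 2)) = -E + (-k * (x - m) ^ 2) := by
      rw [hEdef, hkdef, hmdef]
      field_simp
      ring
    rw [← Real.exp_add]
    conv_lhs => rw [← Real.exp_log hA, ← Real.exp_log hB, ← Real.exp_add, ← Real.exp_add,
      ← Real.exp_sub, ← Real.exp_mul, ← Real.exp_add]
    congr 1
    rw [hCVdef]
    linear_combination hexp
  rw [MeasureTheory.integral_congr_ae (Filter.Eventually.of_forall key)]
  rw [MeasureTheory.integral_const_mul]
  have hshift : ∫ x : ℝ, Real.exp (-k * (x - m) ^ 2) = ∫ x : ℝ, Real.exp (-k * x ^ 2) :=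
    MeasureTheory.integral_sub_right_eq_self (fun x => Real.exp (-k * x ^ 2)) m
  rw [hshift, integral_gaussian]
  rw [← Real.exp_log (show (0:ℝ) < Real.sqrt (Real.pi / k) by positivity), ← Real.exp_add]
  congr 1
  have h2π : (0:ℝ) < 2 * Real.pi := by positivity
  have hlogA : Real.log ((2 * Real.pi * σ ^ 2) ^ (-(1:ℝ) / 2)) =
      (-(1:ℝ)/2) * (Real.log (2 * Real.pi) + 2 * Real.log σ) := by
    rw [Real.log_rpow (by positivity), Real.log_mul (ne_of_gt h2π) (by positivity),
      Real.log_pow]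
    push_cast; ring
  have hlogB : Real.log ((2 * Real.pi * σt ^ 2) ^ (-(1:ℝ) / 2)) =
      (-(1:ℝ)/2) * (Real.log (2 * Real.pi) + 2 * Real.log σt) := by
    rw [Real.log_rpow (by positivity), Real.log_mul (ne_of_gt h2π) (by positivity),
      Real.log_pow]
    push_cast; ring
  have hsq : Real.log (Real.sqrt (Real.pi / k)) =
      (1/2) * (Real.log (2 * Real.pi) + 2 * Real.log σ + 2 * Real.log σt - Real.log D) := by
    rw [Real.log_sqrt (by positivity)]
    have : Real.pi / k = 2 * Real.pi * σ ^ 2 * σt ^ 2 / D := by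
      rw [hkdef]; field_simp
    rw [this, Real.log_div (by positivity) (ne_of_gt hD),
      Real.log_mul (by positivity) (by positivity),
      Real.log_mul (by positivity) (by positivity), Real.log_pow, Real.log_pow]
    push_cast; ring
  have hrhslog : Real.log (Real.sqrt D / (σt ^ α * σ ^ (1 - α))) =
      (1/2) * Real.log D - (α * Real.log σt + (1 - α) * Real.log σ) := by
    rw [Real.log_div (by positivity) (by positivity),
      Real.log_mul (by positivity) (by positivity), Real.log_sqrt hD.le,
      Real.log_rpow hσt, Real.log_rpow hσ]
    ring
  rw [hCVdef, hlogA, hlogB, hsq, hrhslog, hEdef]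
  ring
end
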